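/- Let X be a completely regular Hausdorff (Tychonoff) space, let f ∈ C_B(X), and let f₁, f₂, … be a sequence in C_B(X) such that |f|⁻¹([1/n, ∞)) ⊆ |f_n|⁻¹([1, ∞)) for every positive integer n. Then there is a sequence g₁, g₂, … in C_B(X) such that g_n f_n → f in the supremum norm. -/

import Mathlib

open BoundedContinuousFunction Set Filter Topology

section Preamble

variable {X : Type*} [TopologicalSpace X] {𝕜 : Type*} [RCLike 𝕜]

theorem betaExt_aux (f : X →ᵇ 𝕜) :
    Continuous (fun x => (⟨f x, by
      simpa [Metric.mem_closedBall, dist_zero_right] using f.norm_coe_le_norm x⟩ :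
        Metric.closedBall (0 : 𝕜) ‖f‖)) :=
  f.continuous.subtype_mk _

/-- `f_β`, the unique continuous extension of a bounded continuous function `f : X → 𝕜` to the
Stone–Čech compactification `βX`. -/
noncomputable def betaExt (f : X →ᵇ 𝕜) : StoneCech X → 𝕜 :=
  haveI : CompactSpace (Metric.closedBall (0 : 𝕜) ‖f‖) :=
    isCompact_iff_compactSpace.mp (isCompact_closedBall 0 ‖f‖)
  fun p => (stoneCechExtend (betaExt_aux f) p).1

theorem betaExt_unit (f : X →ᵇ 𝕜) (x : X) : betaExt f (stoneCechUnit x) = f x := by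
  haveI : CompactSpace (Metric.closedBall (0 : 𝕜) ‖f‖) :=
    isCompact_iff_compactSpace.mp (isCompact_closedBall 0 ‖f‖)
  exact congrArg Subtype.val (congrFun (stoneCechExtend_extends (betaExt_aux f)) x)

theorem continuous_betaExt (f : X →ᵇ 𝕜) : Continuous (betaExt f) := by
  haveI : CompactSpace (Metric.closedBall (0 : 𝕜) ‖f‖) :=
    isCompact_iff_compactSpace.mp (isCompact_closedBall 0 ‖f‖)
  exact continuous_subtype_val.comp (continuous_stoneCechExtend _)

/-- `λ_G X`, the union over `g ∈ G` of the cozero-sets in `βX` of the extensions `g_β`. -/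
def lambdaSet (G : Ideal (X →ᵇ 𝕜)) : Set (StoneCech X) :=
  ⋃ g ∈ G, {p | betaExt g p ≠ 0}

end Preamble

/-- Let `f ∈ C_B(X)` and let `f₁, f₂, …` (here `fs 0, fs 1, …`, with `fs n` playing the role
of `f_{n+1}`) be a sequence in `C_B(X)` such that `|f|⁻¹([1/n,∞)) ⊆ |f_n|⁻¹([1,∞))` for every
positive integer `n`. Then `g_n f_n → f` (in supremum norm) for some sequence `g₁, g₂, …`
in `C_B(X)`. -/
theorem exists_seq_mul_tendsto {X : Type*} [TopologicalSpace X] [T35Space X]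
    {𝕜 : Type*} [RCLike 𝕜] (f : X →ᵇ 𝕜) (fs : ℕ → (X →ᵇ 𝕜))
    (hfs : ∀ n : ℕ, {x : X | (1 : ℝ) / (n + 1) ≤ ‖f x‖} ⊆ {x : X | 1 ≤ ‖fs n x‖}) :
    ∃ gs : ℕ → (X →ᵇ 𝕜), Tendsto (fun n => gs n * fs n) atTop (𝓝 f) := by
  classical
  -- denominator
  set c : ℕ → X → ℝ := fun n x => max (‖fs n x‖ ^ 2) 1 with hc
  have hc1 : ∀ n x, (1 : ℝ) ≤ c n x := fun n x => le_max_right _ _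
  have hc0 : ∀ n x, c n x ≠ 0 := fun n x => by
    have := hc1 n x; linarith
  have hnorm_le : ∀ n x, ‖fs n x‖ ≤ c n x := by
    intro n x
    rcases le_or_gt (‖fs n x‖) 1 with h | h
    · exact h.trans (hc1 n x)
    · have : ‖fs n x‖ ≤ ‖fs n x‖ ^ 2 := by nlinarith
      exact this.trans (le_max_left _ _)
  -- the sequence
  refine ⟨fun n => BoundedContinuousFunction.ofNormedAddCommGroup
      (fun x => f x * (starRingEnd 𝕜) (fs n x) * ((c n x : ℝ) : 𝕜)⁻¹)
      ?_ ‖f‖ ?_, ?_⟩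
  · exact (f.continuous.mul ((RCLike.continuous_conj).comp (fs n).continuous)).mul
      ((RCLike.continuous_ofReal.comp
        (((fs n).continuous.norm.pow 2).max continuous_const)).inv₀
        (fun x => by
          simp only [Function.comp_apply, ne_eq, RCLike.ofReal_eq_zero]
          exact hc0 n x))
  · intro x
    have h1 : ‖((c n x : ℝ) : 𝕜)⁻¹‖ = (c n x)⁻¹ := by
      rw [norm_inv, RCLike.norm_ofReal, abs_of_pos (by have := hc1 n x; linarith)]
    calc ‖f x * (starRingEnd 𝕜) (fs n x) * ((c n x : ℝ) : 𝕜)⁻¹‖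
        = ‖f x‖ * ‖fs n x‖ * (c n x)⁻¹ := by
          rw [norm_mul, norm_mul, RCLike.norm_conj, h1]
      _ ≤ ‖f‖ * (c n x) * (c n x)⁻¹ := by
          have hcpos : (0 : ℝ) < c n x := by have := hc1 n x; linarith
          have := f.norm_coe_le_norm x
          gcongr
          exact hnorm_le n x
      _ = ‖f‖ := by rw [mul_inv_cancel_right₀ (hc0 n x)]
  -- convergence
  · rw [tendsto_iff_dist_tendsto_zero]
    apply squeeze_zero (fun n => dist_nonneg) (g := fun n : ℕ => 1 / (n + 1))
    · intro n
      rw [BoundedContinuousFunction.dist_le (by positivity)]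
      intro x
      rw [dist_eq_norm]
      simp only [BoundedContinuousFunction.coe_mul, Pi.mul_apply,
        BoundedContinuousFunction.coe_ofNormedAddCommGroup]
      have key : f x * (starRingEnd 𝕜) (fs n x) * ((c n x : ℝ) : 𝕜)⁻¹ * fs n x - f x
          = f x * (((‖fs n x‖ ^ 2 / c n x - 1 : ℝ)) : 𝕜) := by
        have hconj : (starRingEnd 𝕜) (fs n x) * fs n x = ((‖fs n x‖ ^ 2 : ℝ) : 𝕜) := by
          rw [RCLike.conj_mul]
          push_cast
          ring
        have hcne : ((c n x : ℝ) : 𝕜) ≠ 0 := by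
          simpa using hc0 n x
        field_simp
        rw [mul_assoc, hconj]
        push_cast
        rw [mul_sub (↑(c n x) : 𝕜), mul_one, mul_div_assoc', mul_div_cancel_left₀ _ hcne]
      rw [key, norm_mul, RCLike.norm_ofReal]
      rcases le_or_gt 1 (‖fs n x‖) with h | h
      · -- then c = ‖fs n x‖^2 and the ratio is 1
        have hceq : c n x = ‖fs n x‖ ^ 2 := max_eq_left (by nlinarith)
        rw [hceq, div_self (by nlinarith)]
        simp [one_div]
        positivity
      · -- then ‖f x‖ < 1/(n+1) and the ratio is in [0,1]
        have hfx : ‖f x‖ ≤ 1 / (n + 1) := by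
          by_contra hcon
          push_neg at hcon
          have := hfs n (le_of_lt hcon)
          simp only [Set.mem_setOf_eq] at this
          linarith
        have hratio : |‖fs n x‖ ^ 2 / c n x - 1| ≤ 1 := by
          have hcpos : (0 : ℝ) < c n x := by have := hc1 n x; linarith
          have h1 : ‖fs n x‖ ^ 2 / c n x ≤ 1 := by
            rw [div_le_one hcpos]
            exact le_max_left _ _
          have h2 : 0 ≤ ‖fs n x‖ ^ 2 / c n x := by positivity
          rw [abs_le]; constructor <;> linarith
        calc ‖f x‖ * |‖fs n x‖ ^ 2 / c n x - 1| ≤ (1 / (n + 1)) * 1 :=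
              mul_le_mul hfx hratio (abs_nonneg _) (by positivity)
          _ = 1 / (n + 1) := mul_one _
    · exact tendsto_one_div_add_atTop_nhds_zero_nat
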